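/- Let G be a normed gyrogroup. Every transformation of the form L_a ∘ γ with a ∈ G and γ ∈ GYR(G) is an isometry of the metric space (G, d_η), where d_η(x, y) = ‖⊖x ⊕ y‖. -/

import Mathlib

/-- A gyrogroup: a set with a binary operation `op`, a left identity `e`, left inverses
`inv`, and gyroautomorphisms `gyr a b` (bijective and operation-preserving) satisfying the
left gyroassociative law and the left loop property. -/
class Gyrogroup (G : Type*) where
  /-- the gyrogroup operation `⊕` -/
  op : G → G → G
  /-- the identity element -/
  e : G
  /-- the inverse `⊖a` -/
  inv : G → G
  /-- (G1) `e ⊕ a = a` -/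
  op_e : ∀ a : G, op e a = a
  /-- (G2) `⊖a ⊕ a = e` -/
  op_inv : ∀ a : G, op (inv a) a = e
  /-- the gyroautomorphism `gyr[a, b]` -/
  gyr : G → G → G → G
  /-- (G3) `gyr[a, b]` is bijective -/
  gyr_bijective : ∀ a b : G, Function.Bijective (gyr a b)
  /-- (G3) `gyr[a, b]` preserves the operation -/
  gyr_op : ∀ a b x y : G, gyr a b (op x y) = op (gyr a b x) (gyr a b y)
  /-- (G3) the left gyroassociative law -/
  gyrassoc : ∀ a b c : G, op a (op b c) = op (op a b) (gyr a b c)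
  /-- (G4) the left loop property -/
  loop : ∀ a b : G, gyr (op a b) b = gyr a b

namespace Gyrogroup

variable {G : Type*} [Gyrogroup G]

theorem key (x z : G) : op (inv x) (op x z) = gyr (inv x) x z := by
  rw [gyrassoc, op_inv, op_e]

theorem L_injective (x : G) : Function.Injective (op x) := by
  intro z₁ z₂ h
  have h1 : gyr (inv x) x z₁ = gyr (inv x) x z₂ := by
    rw [← key, ← key, h]
  exact (gyr_bijective (inv x) x).1 h1

theorem L_surjective (x : G) : Function.Surjective (op x) := by
  intro w
  obtain ⟨z, hz⟩ := (gyr_bijective (inv x) x).2 (op (inv x) w)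
  exact ⟨z, L_injective (inv x) (by rw [key, hz])⟩

theorem L_bijective (x : G) : Function.Bijective (op x) :=
  ⟨L_injective x, L_surjective x⟩

/-- The left gyrotranslation `L_a : x ↦ a ⊕ x` as a permutation of `G`. -/
noncomputable def Lperm (a : G) : Equiv.Perm G := Equiv.ofBijective (op a) (L_bijective a)

/-- The gyroautomorphism `gyr[a, b]` as a permutation of `G`. -/
noncomputable def gyrPerm (a b : G) : Equiv.Perm G := Equiv.ofBijective (gyr a b) (gyr_bijective a b)

/-- `GYR(G)`: the subgroup of `Sym(G)` generated by all gyroautomorphisms. -/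
def GYR (G : Type*) [Gyrogroup G] : Subgroup (Equiv.Perm G) :=
  Subgroup.closure {π : Equiv.Perm G | ∃ a b : G, π = gyrPerm a b}

/-- `Γₘ = {L_a ∘ γ : a ∈ G, γ ∈ GYR(G)}`, a subgroup of `Sym(G)`. -/
def Γm (G : Type*) [Gyrogroup G] : Set (Equiv.Perm G) :=
  {T : Equiv.Perm G | ∃ a : G, ∃ γ ∈ GYR G, T = Lperm a * γ}

end Gyrogroup

/-- A normed gyrogroup: a gyrogroup equipped with a gyronorm `‖·‖ : G → ℝ` that is
nonnegative (vanishing exactly at the identity), invariant under taking inverses,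
subadditive, and invariant under gyrations. -/
class NormedGyrogroup (G : Type*) extends Gyrogroup G where
  /-- the gyronorm -/
  gnorm : G → ℝ
  gnorm_nonneg : ∀ x : G, 0 ≤ gnorm x
  gnorm_eq_zero_iff : ∀ x : G, gnorm x = 0 ↔ x = e
  gnorm_inv : ∀ x : G, gnorm (inv x) = gnorm x
  gnorm_op_le : ∀ x y : G, gnorm (op x y) ≤ gnorm x + gnorm y
  gnorm_gyr : ∀ a b x : G, gnorm (gyr a b x) = gnorm x

/-- The gyronorm metric `d_η(x, y) = ‖⊖x ⊕ y‖` of a normed gyrogroup. -/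
def dEta {G : Type*} [NormedGyrogroup G] (x y : G) : ℝ :=
  NormedGyrogroup.gnorm (Gyrogroup.op (Gyrogroup.inv x) y)

namespace Gyrogroup

variable {G : Type*} [Gyrogroup G]

theorem gyr_e_left (b c : G) : gyr e b c = c := by
  apply L_injective b
  have := gyrassoc (e : G) b c
  rw [op_e, op_e] at this
  exact this.symm

theorem gyr_inv_self (a c : G) : gyr (inv a) a c = c := by
  have := loop (inv a) a
  rw [op_inv] at this
  rw [← this, gyr_e_left]

theorem left_cancel (a z : G) : op (inv a) (op a z) = z := by
  rw [key, gyr_inv_self]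

theorem gyr_e_fix (a b : G) : gyr a b e = e := by
  have h : gyr a b e = op (gyr a b e) (gyr a b e) := by
    rw [← gyr_op, op_e]
  have := left_cancel (gyr a b e) (gyr a b e)
  rw [← h, op_inv] at this
  exact this.symm

theorem op_e_right (a : G) : op a e = a := by
  have h1 : op (inv (inv a)) e = a := by
    have := left_cancel (inv a) a
    rwa [op_inv] at this
  have h2 : op (inv (inv a)) (op e e) = op (op (inv (inv a)) e) (gyr (inv (inv a)) e e) := gyrassoc _ _ _
  rw [op_e, gyr_e_fix, h1] at h2
  exact h2.symm

theorem inv_inv (a : G) : inv (inv a) = a := by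
  have h1 : op (inv (inv a)) e = a := by
    have := left_cancel (inv a) a
    rwa [op_inv] at this
  rw [op_e_right] at h1
  exact h1

theorem op_inv_right (a : G) : op a (inv a) = e := by
  have := op_inv (inv a)
  rwa [inv_inv] at this

theorem left_cancel' (a z : G) : op a (op (inv a) z) = z := by
  have := left_cancel (inv a) z
  rwa [inv_inv] at this

theorem left_inv_unique {b a : G} (h : op b a = e) : b = inv a := by
  have h2 : op b (op a (inv a)) = op (op b a) (gyr b a (inv a)) := gyrassoc _ _ _
  rw [op_inv_right, op_e_right, h, op_e] at h2
  have hl : gyr b a = gyr e a := by rw [← h, loop]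
  rw [hl, gyr_e_left] at h2
  exact h2

theorem ungar_key (a b c : G) : op (inv (op a b)) (op a c) = gyr a b (op (inv b) c) := by
  have h1 : op (op a b) (gyr a b (op (inv b) c)) = op a c := by
    rw [← gyrassoc, left_cancel']
  calc op (inv (op a b)) (op a c)
      = op (inv (op a b)) (op (op a b) (gyr a b (op (inv b) c))) := by rw [h1]
    _ = gyr a b (op (inv b) c) := left_cancel _ _

end Gyrogroup

theorem perm_apply_inv_self {α : Type*} (π : Equiv.Perm α) (x : α) : π (π⁻¹ x) = x :=
  (Equiv.eq_symm_apply π).mp rfl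

open Gyrogroup NormedGyrogroup in
theorem gyr_mem_preserves {G : Type*} [NormedGyrogroup G] {γ : Equiv.Perm G}
    (hγ : γ ∈ GYR G) :
    (∀ x y : G, γ (op x y) = op (γ x) (γ y)) ∧ (∀ x : G, gnorm (γ x) = gnorm x) := by
  refine Subgroup.closure_induction ?_ ?_ ?_ ?_ hγ
  · rintro π ⟨a, b, rfl⟩
    exact ⟨fun x y => gyr_op a b x y, fun x => gnorm_gyr a b x⟩
  · exact ⟨fun x y => rfl, fun x => rfl⟩
  · rintro π σ _ _ ⟨hπ1, hπ2⟩ ⟨hσ1, hσ2⟩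
    exact ⟨fun x y => by simp [Equiv.Perm.mul_apply, hσ1, hπ1],
           fun x => by simp [Equiv.Perm.mul_apply, hσ2, hπ2]⟩
  · rintro π _ ⟨hπ1, hπ2⟩
    constructor
    · intro x y
      apply π.injective
      rw [hπ1, perm_apply_inv_self, perm_apply_inv_self,
        perm_apply_inv_self]
    · intro x
      rw [← hπ2 (π⁻¹ x), perm_apply_inv_self]

open Gyrogroup NormedGyrogroup in
theorem gyr_mem_inv {G : Type*} [NormedGyrogroup G] {γ : Equiv.Perm G}
    (hγ : γ ∈ GYR G) (x : G) : γ (inv x) = inv (γ x) := by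
  obtain ⟨h1, h2⟩ := gyr_mem_preserves hγ
  have he : γ (e : G) = e := by
    rw [← gnorm_eq_zero_iff, h2, gnorm_eq_zero_iff]
  apply left_inv_unique
  rw [← h1, op_inv, he]

open Gyrogroup in
/-- In a normed gyrogroup `G`, every transformation of the form `L_a ∘ γ` with `a ∈ G` and
`γ ∈ GYR(G)` is an isometry of the metric space `(G, d_η)`. -/
theorem stmt18 {G : Type*} [NormedGyrogroup G] (a : G) (γ : Equiv.Perm G)
    (hγ : γ ∈ GYR G) :
    ∀ x y : G, dEta ((Lperm a * γ) x) ((Lperm a * γ) y) = dEta x y := by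
  intro x y
  obtain ⟨h1, h2⟩ := gyr_mem_preserves hγ
  have happ : ∀ z : G, (Lperm a * γ) z = op a (γ z) := fun z => rfl
  rw [happ, happ]
  unfold dEta
  rw [ungar_key, NormedGyrogroup.gnorm_gyr, ← gyr_mem_inv hγ, ← h1, h2]
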